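/- Define I(α, β) = ∫_{α}^{∞} φ(u) Φ(u + β) du for α, β ∈ ℝ, where φ and Φ are the standard normal density and CDF. Then for every α ∈ ℝ, I(α, 0) = (1/2)(1 − Φ(α)²), and for every β ∈ ℝ, I(0, β) = Φ(β/√2) − (1/2) Φ(β/√2)². -/

import Mathlib

open MeasureTheory Set

/-- Standard normal density `φ(x) = (1/√(2π)) e^{−x²/2}`. -/
noncomputable def stdNormalPDF (x : ℝ) : ℝ :=
  (Real.sqrt (2 * Real.pi))⁻¹ * Real.exp (-x ^ 2 / 2)

/-- Standard normal CDF `Φ(x) = ∫_{-∞}^x φ(u) du`. -/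
noncomputable def stdNormalCDF (x : ℝ) : ℝ :=
  ∫ u in Set.Iic x, stdNormalPDF u

/-- The integral function `I(α, β) = ∫_α^∞ φ(u) Φ(u + β) du`. -/
noncomputable def intI (α β : ℝ) : ℝ :=
  ∫ u in Set.Ioi α, stdNormalPDF u * stdNormalCDF (u + β)

open Filter Topology

lemma sqrt2pi_pos : 0 < Real.sqrt (2 * Real.pi) := Real.sqrt_pos.2 (by positivity)

lemma pdf_nonneg (x : ℝ) : 0 ≤ stdNormalPDF x := by
  unfold stdNormalPDF; positivity

lemma pdf_le (x : ℝ) : stdNormalPDF x ≤ (Real.sqrt (2 * Real.pi))⁻¹ := by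
  unfold stdNormalPDF
  have h1 : Real.exp (-x ^ 2 / 2) ≤ 1 := Real.exp_le_one_iff.2 (by nlinarith [sq_nonneg x])
  simpa using mul_le_of_le_one_right (inv_nonneg.2 sqrt2pi_pos.le) h1

lemma pdf_eq' : stdNormalPDF = fun x => (Real.sqrt (2 * Real.pi))⁻¹ * Real.exp (-(1/2 : ℝ) * x ^ 2) := by
  funext x; unfold stdNormalPDF; ring_nf

lemma continuous_pdf : Continuous stdNormalPDF := by
  unfold stdNormalPDF; fun_prop

lemma integrable_pdf : Integrable stdNormalPDF := by
  rw [pdf_eq']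
  exact (integrable_exp_neg_mul_sq (by norm_num)).const_mul _

lemma integral_pdf : ∫ x, stdNormalPDF x = 1 := by
  rw [pdf_eq', integral_const_mul, integral_gaussian]
  rw [show (Real.pi / (1/2 : ℝ)) = 2 * Real.pi by ring]
  exact inv_mul_cancel₀ sqrt2pi_pos.ne'

lemma cdf_nonneg (x : ℝ) : 0 ≤ stdNormalCDF x :=
  setIntegral_nonneg measurableSet_Iic fun u _ => pdf_nonneg u

lemma cdf_le_one (x : ℝ) : stdNormalCDF x ≤ 1 := by
  rw [← integral_pdf]
  exact setIntegral_le_integral integrable_pdf (ae_of_all _ pdf_nonneg)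

lemma cdf_sub (a b : ℝ) : stdNormalCDF b - stdNormalCDF a = ∫ x in a..b, stdNormalPDF x :=
  intervalIntegral.integral_Iic_sub_Iic integrable_pdf.integrableOn integrable_pdf.integrableOn

lemma hasDerivAt_cdf (x : ℝ) : HasDerivAt stdNormalCDF (stdNormalPDF x) x := by
  have h : ∀ y, stdNormalCDF y = stdNormalCDF 0 + ∫ t in (0:ℝ)..y, stdNormalPDF t := by
    intro y; rw [← cdf_sub]; ring
  have hd : HasDerivAt (fun y => stdNormalCDF 0 + ∫ t in (0:ℝ)..y, stdNormalPDF t)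
      (stdNormalPDF x) x := by
    refine HasDerivAt.const_add _ ?_
    exact intervalIntegral.integral_hasDerivAt_right
      integrable_pdf.intervalIntegrable
      (continuous_pdf.stronglyMeasurableAtFilter _ _)
      continuous_pdf.continuousAt
  exact hd.congr_of_eventuallyEq (Eventually.of_forall h)

lemma tendsto_cdf_atTop : Tendsto stdNormalCDF atTop (𝓝 1) := by
  rw [← integral_pdf]
  exact (MeasureTheory.aecover_Iic tendsto_id).integral_tendsto_of_countably_generated
    integrable_pdf

lemma tail_eq (x : ℝ) : 1 - stdNormalCDF x = ∫ u in Ioi x, stdNormalPDF u := by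
  have := intervalIntegral.integral_Iic_add_Ioi (b := x) integrable_pdf.integrableOn integrable_pdf.integrableOn
  rw [integral_pdf] at this
  unfold stdNormalCDF
  linarith

lemma cdf_zero : stdNormalCDF 0 = 1 / 2 := by
  have h1 : 1 - stdNormalCDF 0 = ∫ u in Ioi (0:ℝ), stdNormalPDF u := tail_eq 0
  have h2 : ∫ u in Ioi (0:ℝ), stdNormalPDF u = stdNormalCDF 0 := by
    unfold stdNormalCDF
    have he : ∀ u : ℝ, stdNormalPDF u = stdNormalPDF (-u) := by
      intro u; unfold stdNormalPDF; rw [neg_sq]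
    calc ∫ u in Ioi (0:ℝ), stdNormalPDF u = ∫ u in Ioi (0:ℝ), stdNormalPDF (-u) := by
          simp_rw [← he]
      _ = ∫ u in Iic (-(0:ℝ)), stdNormalPDF u := integral_comp_neg_Ioi 0 stdNormalPDF
      _ = ∫ u in Iic (0:ℝ), stdNormalPDF u := by rw [neg_zero]
  rw [h2] at h1
  linarith

lemma part1 (α : ℝ) : intI α 0 = 1 / 2 * (1 - (stdNormalCDF α) ^ 2) := by
  unfold intI
  simp only [add_zero]
  have hderiv : ∀ x ∈ Ici α, HasDerivAt (fun y => (stdNormalCDF y) ^ 2 / 2)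
      (stdNormalPDF x * stdNormalCDF x) x := by
    intro x _
    have h := ((hasDerivAt_cdf x).pow 2).div_const 2
    refine h.congr_deriv ?_
    push_cast
    ring
  have hpos : ∀ x ∈ Ioi α, 0 ≤ stdNormalPDF x * stdNormalCDF x := fun x _ =>
    mul_nonneg (pdf_nonneg x) (cdf_nonneg x)
  have htend : Tendsto (fun y => (stdNormalCDF y) ^ 2 / 2) atTop (𝓝 (1 ^ 2 / 2)) :=
    (tendsto_cdf_atTop.pow 2).div_const 2
  have := integral_Ioi_of_hasDerivAt_of_nonneg' hderiv hpos htend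
  rw [this]
  ring

lemma integral_comp_add_right_Ioi (f : ℝ → ℝ) (a c : ℝ) :
    ∫ x in Ioi a, f (x + c) = ∫ x in Ioi (a + c), f x := by
  rw [← integral_indicator measurableSet_Ioi, ← integral_indicator measurableSet_Ioi,
    ← integral_add_right_eq_self (Set.indicator (Ioi (a + c)) f) c]
  congr 1
  funext x
  simp only [indicator_apply, mem_Ioi]
  have hiff : a + c < x + c ↔ a < x := by constructor <;> intro <;> linarith
  simp [hiff]

lemma D_eq (β : ℝ) : ∫ u in Ioi (0:ℝ), stdNormalPDF u * stdNormalPDF (u + β)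
    = (2 * Real.pi)⁻¹ * Real.exp (-β ^ 2 / 4) * ∫ v in Ioi (β / 2), Real.exp (-v ^ 2) := by
  have key : ∀ u : ℝ, stdNormalPDF u * stdNormalPDF (u + β)
      = (2 * Real.pi)⁻¹ * Real.exp (-β ^ 2 / 4) * Real.exp (-(u + β / 2) ^ 2) := by
    intro u
    unfold stdNormalPDF
    have hs : (Real.sqrt (2 * Real.pi))⁻¹ * (Real.sqrt (2 * Real.pi))⁻¹ = (2 * Real.pi)⁻¹ := by
      rw [← mul_inv, Real.mul_self_sqrt (by positivity)]
    calc (Real.sqrt (2 * Real.pi))⁻¹ * Real.exp (-u ^ 2 / 2) *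
          ((Real.sqrt (2 * Real.pi))⁻¹ * Real.exp (-(u + β) ^ 2 / 2))
        = (2 * Real.pi)⁻¹ * Real.exp (-u ^ 2 / 2 + -(u + β) ^ 2 / 2) := by
          rw [Real.exp_add]; rw [← hs]; ring
      _ = (2 * Real.pi)⁻¹ * Real.exp (-β ^ 2 / 4 + -(u + β / 2) ^ 2) := by
          rw [show -u ^ 2 / 2 + -(u + β) ^ 2 / 2 = -β ^ 2 / 4 + -(u + β / 2) ^ 2 by ring]
      _ = (2 * Real.pi)⁻¹ * Real.exp (-β ^ 2 / 4) * Real.exp (-(u + β / 2) ^ 2) := by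
          rw [Real.exp_add]; ring
  simp_rw [key]
  rw [integral_const_mul]
  congr 1
  have := integral_comp_add_right_Ioi (fun v => Real.exp (-v ^ 2)) 0 (β / 2)
  simpa using this

lemma hasDerivAt_G (β : ℝ) :
    HasDerivAt (fun b => stdNormalCDF (b / Real.sqrt 2) - (stdNormalCDF (b / Real.sqrt 2)) ^ 2 / 2)
      ((2 * Real.pi)⁻¹ * Real.exp (-β ^ 2 / 4) * ∫ v in Ioi (β / 2), Real.exp (-v ^ 2)) β := by
  have hs2 : (0:ℝ) < Real.sqrt 2 := Real.sqrt_pos.2 (by norm_num)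
  have hss : Real.sqrt 2 * Real.sqrt 2 = 2 := Real.mul_self_sqrt (by norm_num)
  set t := β / Real.sqrt 2 with ht
  have h1 : HasDerivAt (fun b : ℝ => b / Real.sqrt 2) (Real.sqrt 2)⁻¹ β := by
    simpa using (hasDerivAt_id β).div_const (Real.sqrt 2)
  have h2 : HasDerivAt (fun b => stdNormalCDF (b / Real.sqrt 2))
      (stdNormalPDF t * (Real.sqrt 2)⁻¹) β := by
    exact (hasDerivAt_cdf t).comp β h1
  have h3 := h2.sub ((h2.pow 2).div_const 2)
  have hval : (2 * Real.pi)⁻¹ * Real.exp (-β ^ 2 / 4) * ∫ v in Ioi (β / 2), Real.exp (-v ^ 2)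
      = (Real.sqrt 2)⁻¹ * stdNormalPDF t * (1 - stdNormalCDF t) := by
    rw [tail_eq]
    have hcv := MeasureTheory.integral_comp_mul_left_Ioi (fun u => stdNormalPDF u) (β / 2) hs2
    have hta : Real.sqrt 2 * (β / 2) = t := by
      rw [ht, eq_div_iff hs2.ne']
      linear_combination β / 2 * hss
    rw [hta] at hcv
    have hphi : ∀ x : ℝ, stdNormalPDF (Real.sqrt 2 * x)
        = (Real.sqrt (2 * Real.pi))⁻¹ * Real.exp (-x ^ 2) := by
      intro x
      unfold stdNormalPDF
      congr 1
      rw [mul_pow, Real.sq_sqrt (by norm_num : (0:ℝ) ≤ 2)]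
      ring
    simp only [hphi] at hcv
    rw [integral_const_mul, smul_eq_mul] at hcv
    have hIoi : ∫ u in Ioi t, stdNormalPDF u
        = Real.sqrt 2 * ((Real.sqrt (2 * Real.pi))⁻¹ * ∫ x in Ioi (β / 2), Real.exp (-x ^ 2)) := by
      have hmul := congrArg (fun y => Real.sqrt 2 * y) hcv
      rw [hmul, ← mul_assoc, mul_inv_cancel₀ hs2.ne', one_mul]
    rw [hIoi]
    have hpdf_t : stdNormalPDF t = (Real.sqrt (2 * Real.pi))⁻¹ * Real.exp (-β ^ 2 / 4) := by
      unfold stdNormalPDF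
      congr 1
      rw [ht, div_pow, Real.sq_sqrt (by norm_num : (0:ℝ) ≤ 2)]
      ring
    rw [hpdf_t]
    have hs : (Real.sqrt (2 * Real.pi))⁻¹ * (Real.sqrt (2 * Real.pi))⁻¹ = (2 * Real.pi)⁻¹ := by
      rw [← mul_inv, Real.mul_self_sqrt (by positivity)]
    have hs2' : (Real.sqrt 2)⁻¹ * Real.sqrt 2 = 1 := inv_mul_cancel₀ hs2.ne'
    calc (2 * Real.pi)⁻¹ * Real.exp (-β ^ 2 / 4) * ∫ v in Ioi (β / 2), Real.exp (-v ^ 2)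
        = ((Real.sqrt 2)⁻¹ * Real.sqrt 2) *
          ((Real.sqrt (2 * Real.pi))⁻¹ * (Real.sqrt (2 * Real.pi))⁻¹)
          * Real.exp (-β ^ 2 / 4) * ∫ v in Ioi (β / 2), Real.exp (-v ^ 2) := by
          rw [hs2', hs]; ring
      _ = (Real.sqrt 2)⁻¹ * ((Real.sqrt (2 * Real.pi))⁻¹ * Real.exp (-β ^ 2 / 4)) *
          (Real.sqrt 2 * ((Real.sqrt (2 * Real.pi))⁻¹ * ∫ x in Ioi (β / 2), Real.exp (-x ^ 2))) := by
          ring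
  refine h3.congr_deriv ?_
  rw [hval]
  push_cast
  norm_num
  ring

lemma hasDerivAt_F (β : ℝ) :
    HasDerivAt (fun b => intI 0 b)
      (∫ u in Ioi (0:ℝ), stdNormalPDF u * stdNormalPDF (u + β)) β := by
  have hmeas : ∀ b : ℝ, AEStronglyMeasurable (fun u => stdNormalPDF u * stdNormalCDF (u + b))
      (volume.restrict (Ioi (0:ℝ))) := by
    intro b
    have hc : Continuous stdNormalCDF := by
      rw [continuous_iff_continuousAt]
      exact fun x => (hasDerivAt_cdf x).continuousAt
    exact (continuous_pdf.mul (hc.comp (continuous_id.add continuous_const))).aestronglyMeasurable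
  have hint : ∀ b : ℝ, Integrable (fun u => stdNormalPDF u * stdNormalCDF (u + b))
      (volume.restrict (Ioi (0:ℝ))) := by
    intro b
    refine Integrable.mono' (g := fun u => stdNormalPDF u) integrable_pdf.integrableOn
      (hmeas b) (ae_of_all _ fun u => ?_)
    rw [Real.norm_eq_abs, abs_of_nonneg (mul_nonneg (pdf_nonneg u) (cdf_nonneg _))]
    simpa using mul_le_of_le_one_right (pdf_nonneg u) (cdf_le_one (u + b))
  have key := hasDerivAt_integral_of_dominated_loc_of_deriv_le
    (μ := volume.restrict (Ioi (0:ℝ))) (x₀ := β)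
    (F := fun b u => stdNormalPDF u * stdNormalCDF (u + b))
    (F' := fun b u => stdNormalPDF u * stdNormalPDF (u + b))
    (bound := fun u => stdNormalPDF u * (Real.sqrt (2 * Real.pi))⁻¹)
    (Filter.univ_mem)
    (Eventually.of_forall fun b => hmeas b)
    (hint β)
    ((continuous_pdf.mul (continuous_pdf.comp (continuous_id.add continuous_const))).aestronglyMeasurable)
    (ae_of_all _ fun u b _ => by
      rw [Real.norm_eq_abs, abs_of_nonneg (mul_nonneg (pdf_nonneg u) (pdf_nonneg _))]
      show stdNormalPDF u * stdNormalPDF (u + b) ≤ stdNormalPDF u * (Real.sqrt (2 * Real.pi))⁻¹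
      exact mul_le_mul_of_nonneg_left (pdf_le _) (pdf_nonneg u))
    ((integrable_pdf.mul_const _).integrableOn)
    (ae_of_all _ fun u b _ => by
      have h1 : HasDerivAt (fun b : ℝ => u + b) 1 b := by
        simpa using (hasDerivAt_id b).const_add u
      have h2 : HasDerivAt (fun b => stdNormalCDF (u + b)) (stdNormalPDF (u + b) * 1) b :=
        (hasDerivAt_cdf (u + b)).comp b h1
      simpa using h2.const_mul (stdNormalPDF u))
  exact key.2

lemma part2 (β : ℝ) : intI 0 β =
    stdNormalCDF (β / Real.sqrt 2) - 1 / 2 * (stdNormalCDF (β / Real.sqrt 2)) ^ 2 := by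
  set f : ℝ → ℝ := fun b => intI 0 b -
    (stdNormalCDF (b / Real.sqrt 2) - (stdNormalCDF (b / Real.sqrt 2)) ^ 2 / 2) with hf
  have hderiv : ∀ b : ℝ, HasDerivAt f 0 b := by
    intro b
    have h := (hasDerivAt_F b).sub (hasDerivAt_G b)
    rw [D_eq b, sub_self] at h
    exact h
  have hconst : f β = f 0 :=
    is_const_of_deriv_eq_zero (fun x => (hderiv x).differentiableAt)
      (fun x => (hderiv x).deriv) β 0
  have h0 : f 0 = 0 := by
    rw [hf]
    simp only [zero_div]
    rw [part1 0, cdf_zero]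
    norm_num
  have : f β = 0 := hconst.trans h0
  rw [hf] at this
  simp only [sub_eq_zero] at this
  rw [this]
  ring

theorem intI_special_values :
    (∀ α : ℝ, intI α 0 = 1 / 2 * (1 - (stdNormalCDF α) ^ 2)) ∧
      (∀ β : ℝ, intI 0 β =
        stdNormalCDF (β / Real.sqrt 2) - 1 / 2 * (stdNormalCDF (β / Real.sqrt 2)) ^ 2) := by
  exact ⟨part1, part2⟩
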